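/- Let V be a nonempty topological space and let G be a nontrivial path-connected topological group. For a map f : C(V,G) → G the following are equivalent. (a) f is a group homomorphism and there exists v₀ ∈ V such that f(x) = x(v₀) for every x ∈ C(V,G) whose coset [x] modulo the null-homotopic maps contains at least one non-surjective map. (b) There exist v₀ ∈ V and a group homomorphism ψ : C(V,G) → G with values in the center Z(G) of G such that ψ(x) = ψ(y) whenever x and y are homotopic, ψ(x) = 1 for every x whose coset [x] contains a non-surjective map, and f(x) = ψ(x)·x(v₀) for every x ∈ C(V,G). -/

import Mathlib

open ContinuousMap

section Aux

variable {V G : Type*} [TopologicalSpace V] [TopologicalSpace G] [Group G] [IsTopologicalGroup G]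

lemma homotopic_mul_aux {f₁ f₂ g₁ g₂ : C(V, G)} (h₁ : f₁.Homotopic g₁)
    (h₂ : f₂.Homotopic g₂) : (f₁ * f₂).Homotopic (g₁ * g₂) := by
  obtain ⟨H₁⟩ := h₁
  obtain ⟨H₂⟩ := h₂
  exact ⟨{ toFun := fun p => H₁ p * H₂ p
           continuous_toFun := H₁.continuous.mul H₂.continuous
           map_zero_left := fun v => by simp
           map_one_left := fun v => by simp }⟩

lemma homotopic_inv_aux {f g : C(V, G)} (h : f.Homotopic g) : f⁻¹.Homotopic g⁻¹ := by
  obtain ⟨H⟩ := h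
  exact ⟨{ toFun := fun p => (H p)⁻¹
           continuous_toFun := H.continuous.inv
           map_zero_left := fun v => by simp
           map_one_left := fun v => by simp }⟩

lemma homotopic_conj_aux [PathConnectedSpace G] (x : C(V, G)) (g : G) :
    ((ContinuousMap.const V g) * x * (ContinuousMap.const V g)⁻¹).Homotopic x := by
  obtain ⟨γ⟩ : Nonempty (Path g 1) := ⟨PathConnectedSpace.somePath g 1⟩
  exact ⟨{ toFun := fun p => γ p.1 * x p.2 * (γ p.1)⁻¹
           continuous_toFun := by
             have hγ : Continuous fun p : unitInterval × V => γ p.1 :=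
               γ.continuous.comp continuous_fst
             exact (hγ.mul (x.continuous.comp continuous_snd)).mul hγ.inv
           map_zero_left := fun v => by simp
           map_one_left := fun v => by simp }⟩

end Aux

/-- For a nonempty space `V`, a nontrivial path-connected topological group `G`
and a map `f : C(V,G) → G`, the following are equivalent: (a) `f` is a group homomorphism and
there is `v₀ ∈ V` with `f x = x v₀` for every `x` whose coset modulo the null-homotopic maps
contains a non-surjective map; (b) there are `v₀ ∈ V` and a central-valued, homotopy-invariant
group homomorphism `ψ : C(V,G) → G`, trivial on cosets containing a non-surjective map,
such that `f x = ψ x * x v₀` for all `x`. -/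
theorem rangeDecreasing_representation_iff {V G : Type*} [TopologicalSpace V] [Nonempty V]
    [TopologicalSpace G] [Group G] [IsTopologicalGroup G] [PathConnectedSpace G] [Nontrivial G]
    (f : C(V, G) → G) :
    ((∀ x y : C(V, G), f (x * y) = f x * f y) ∧
      ∃ v₀ : V, ∀ x : C(V, G),
        (∃ x₀ : C(V, G), (x₀ * x⁻¹).Homotopic 1 ∧ ¬Function.Surjective ⇑x₀) → f x = x v₀) ↔
    (∃ (v₀ : V) (ψ : C(V, G) →* G),
      (∀ x : C(V, G), ψ x ∈ Subgroup.center G) ∧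
      (∀ x y : C(V, G), x.Homotopic y → ψ x = ψ y) ∧
      (∀ x : C(V, G),
        (∃ x₀ : C(V, G), (x₀ * x⁻¹).Homotopic 1 ∧ ¬Function.Surjective ⇑x₀) → ψ x = 1) ∧
      ∀ x : C(V, G), f x = ψ x * x v₀) := by
  constructor
  · rintro ⟨hmul, v₀, hev⟩
    -- constant maps are not surjective
    have hconst_nonsurj : ∀ g : G, ¬Function.Surjective ⇑(ContinuousMap.const V g) := by
      intro g hs
      obtain ⟨g', hg'⟩ := exists_ne g
      obtain ⟨v, hv⟩ := hs g'
      exact hg' hv.symm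
    -- f of a null-homotopic map is evaluation
    have hnull : ∀ n : C(V, G), n.Homotopic 1 → f n = n v₀ := by
      intro n hn
      refine hev n ⟨ContinuousMap.const V 1, ?_, hconst_nonsurj 1⟩
      have : (ContinuousMap.const V 1 : C(V, G)) * n⁻¹ = n⁻¹ := by
        ext v; simp
      rw [this]
      simpa using homotopic_inv_aux hn
    -- φ
    set φ : C(V, G) → G := fun x => f x * (x v₀)⁻¹ with hφ
    -- homotopy invariance of φ
    have hφ_inv : ∀ x y : C(V, G), x.Homotopic y → φ x = φ y := by
      intro x y hxy
      have hn : (x⁻¹ * y).Homotopic 1 := by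
        have := homotopic_mul_aux (homotopic_inv_aux (ContinuousMap.Homotopic.refl x)) hxy
        have h1 : x⁻¹ * x = 1 := by ext v; simp
        rw [h1] at this
        exact this.symm
      have h2 : y = x * (x⁻¹ * y) := by ext v; simp
      have h3 : f y = f x * (x v₀)⁻¹ * y v₀ := by
        rw [h2, hmul, hnull _ hn]
        simp [mul_assoc]
      simp only [hφ, h3]
      group
    -- φ is central-valued
    have hφ_cent : ∀ x : C(V, G), φ x ∈ Subgroup.center G := by
      intro x
      rw [Subgroup.mem_center_iff]
      intro g
      have hc := hφ_inv _ _ (homotopic_conj_aux x g)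
      have hfc : f ((ContinuousMap.const V g) * x * (ContinuousMap.const V g)⁻¹)
          = g * f x * g⁻¹ := by
        rw [hmul, hmul]
        have h1 : f (ContinuousMap.const V g) = g := by
          simpa using hev (ContinuousMap.const V g)
            ⟨ContinuousMap.const V g, by simpa using ContinuousMap.Homotopic.refl 1,
              hconst_nonsurj g⟩
        have h2 : f (ContinuousMap.const V g)⁻¹ = g⁻¹ := by
          simpa using hev (ContinuousMap.const V g)⁻¹
            ⟨(ContinuousMap.const V g)⁻¹, by simpa using ContinuousMap.Homotopic.refl 1,
              fun hs => hconst_nonsurj g⁻¹ hs⟩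
        rw [h1, h2]
      have heval : ((ContinuousMap.const V g) * x * (ContinuousMap.const V g)⁻¹) v₀
          = g * x v₀ * g⁻¹ := by simp
      simp only [hφ, hfc, heval] at hc
      have : g * (f x * (x v₀)⁻¹) * g⁻¹ = f x * (x v₀)⁻¹ := by
        rw [show g * (f x * (x v₀)⁻¹) * g⁻¹ = g * f x * g⁻¹ * (g * x v₀ * g⁻¹)⁻¹ from by group]
        exact hc
      calc g * φ x = g * (f x * (x v₀)⁻¹) := rfl
        _ = (g * (f x * (x v₀)⁻¹) * g⁻¹) * g := by group
        _ = (f x * (x v₀)⁻¹) * g := by rw [this]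
        _ = φ x * g := rfl
    -- φ is multiplicative
    have hφ_mul : ∀ x y : C(V, G), φ (x * y) = φ x * φ y := by
      intro x y
      have hc := (Subgroup.mem_center_iff.mp (hφ_cent y)) ((x v₀)⁻¹)
      simp only [hφ] at hc ⊢
      rw [hmul]
      have hxy : (x * y) v₀ = x v₀ * y v₀ := rfl
      rw [hxy, mul_inv_rev]
      calc f x * f y * ((y v₀)⁻¹ * (x v₀)⁻¹)
          = f x * (f y * (y v₀)⁻¹ * (x v₀)⁻¹) := by group
        _ = f x * ((x v₀)⁻¹ * (f y * (y v₀)⁻¹)) := by rw [← hc]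
        _ = f x * (x v₀)⁻¹ * (f y * (y v₀)⁻¹) := by group
    have hφ_one : φ 1 = 1 := by
      have h : φ 1 * φ 1 = φ 1 := by rw [← hφ_mul 1 1, mul_one]
      exact mul_eq_left.mp h
    refine ⟨v₀, ⟨⟨φ, hφ_one⟩, hφ_mul⟩, hφ_cent, hφ_inv, ?_, ?_⟩
    · intro x hx
      simp only [MonoidHom.coe_mk, OneHom.coe_mk, hφ]
      rw [hev x hx]
      simp
    · intro x
      simp only [MonoidHom.coe_mk, OneHom.coe_mk, hφ]
      group
  · rintro ⟨v₀, ψ, hcent, _hinv, htriv, hrep⟩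
    refine ⟨?_, v₀, ?_⟩
    · intro x y
      have hc := (Subgroup.mem_center_iff.mp (hcent y)) (x v₀)
      rw [hrep (x * y), hrep x, hrep y, map_mul]
      have : (x * y) v₀ = x v₀ * y v₀ := rfl
      rw [this]
      calc ψ x * ψ y * (x v₀ * y v₀)
          = ψ x * (ψ y * x v₀) * y v₀ := by group
        _ = ψ x * (x v₀ * ψ y) * y v₀ := by rw [hc]
        _ = ψ x * x v₀ * (ψ y * y v₀) := by group
    · intro x hx
      rw [hrep x, htriv x hx, one_mul]
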